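/- arXiv:2011.10172 — 2 statements merged into one kernel-verified Lean document; each statement's English description precedes it below -/
import Mathlib

section
/- Let n ≥ 2, let G ∈ 𝒢_{2n}, and let M be a perfect matching of G with f(G,M) = n−1. Then G is minimal (i.e., F(G−e) ≤ n−2 for every edge e of G) if and only if for every two distinct edges e and e' of M, the subgraph of G induced by the four endpoints of e and e' is exactly an M-alternating 4-cycle (a chordless 4-cycle whose edges appear alternately in M and E(G)∖M). -/
open SimpleGraph

/-- `M` is a perfect matching of the simple graph `G`, viewed as a set of edges:
the edges of `M` are pairwise disjoint edges of `G` covering every vertex. -/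
def IsPM {V : Type*} (G : SimpleGraph V) (M : Set (Sym2 V)) : Prop :=
  M ⊆ G.edgeSet ∧
  (∀ e ∈ M, ∀ f ∈ M, e ≠ f → ∀ v : V, v ∈ e → v ∉ f) ∧
  (∀ v : V, ∃ e ∈ M, v ∈ e)

/-- `S` is a forcing set of the perfect matching `M` of `G`:
`S ⊆ M` and `M` is the unique perfect matching of `G` containing `S`. -/
def IsForcingSet {V : Type*} (G : SimpleGraph V) (M S : Set (Sym2 V)) : Prop :=
  S ⊆ M ∧ ∀ M', IsPM G M' → S ⊆ M' → M' = M

/-- The forcing number `f(G,M)`: smallest cardinality of a forcing set of `M`. -/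
noncomputable def forcingNum {V : Type*} (G : SimpleGraph V) (M : Set (Sym2 V)) : ℕ :=
  sInf {k | ∃ S, IsForcingSet G M S ∧ S.ncard = k}

/-- The minimum forcing number `f(G)`. -/
noncomputable def minForcing {V : Type*} (G : SimpleGraph V) : ℕ :=
  sInf {k | ∃ M, IsPM G M ∧ forcingNum G M = k}

/-- The maximum forcing number `F(G)`. -/
noncomputable def maxForcing {V : Type*} (G : SimpleGraph V) : ℕ :=
  sSup {k | ∃ M, IsPM G M ∧ forcingNum G M = k}

/-- Vertex connectivity `κ(G)`: least size of a set of vertices whose deletion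
disconnects the graph or leaves at most one vertex. -/
noncomputable def vertexConn {V : Type*} (G : SimpleGraph V) : ℕ :=
  sInf {k | ∃ X : Set V, X.ncard = k ∧ (¬ (G.induce Xᶜ).Connected ∨ Xᶜ.ncard ≤ 1)}

/-- Edge connectivity `λ(G)`: least size of a set of edges whose deletion
disconnects the graph. -/
noncomputable def edgeConn {V : Type*} (G : SimpleGraph V) : ℕ :=
  sInf {k | ∃ F : Set (Sym2 V), F ⊆ G.edgeSet ∧ F.ncard = k ∧ ¬ (G.deleteEdges F).Connected}

/-- `G` is `l`-extendable: `G` is connected, has at least `2l+2` vertices, has a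
perfect matching, and every matching of size `l` extends to a perfect matching. -/
def IsExtendable {V : Type*} [Fintype V] (G : SimpleGraph V) (l : ℕ) : Prop :=
  G.Connected ∧ 2 * l + 2 ≤ Fintype.card V ∧ (∃ M, IsPM G M) ∧
    ∀ N : Set (Sym2 V), N ⊆ G.edgeSet →
      (∀ e ∈ N, ∀ f ∈ N, e ≠ f → ∀ v : V, v ∈ e → v ∉ f) → N.ncard = l →
      ∃ M, IsPM G M ∧ N ⊆ M

/-- `G` is factor-critical: deleting any vertex leaves a graph with a perfect matching. -/
def IsFactorCritical {V : Type*} (G : SimpleGraph V) : Prop :=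
  ∀ v : V, ∃ M, IsPM (G.induce {v}ᶜ) M

/-- `o(G)`: the number of connected components of odd order. -/
noncomputable def oddComponents {V : Type*} (G : SimpleGraph V) : ℕ :=
  {c : G.ConnectedComponent | Odd c.supp.ncard}.ncard

/-- `G` belongs to `𝒦_{n,n}⁺`: it is obtained from `K_{n,n}` by adding edges inside one
partite set; equivalently there is an independent set `A` of size `n` all of whose
vertices are adjacent to all vertices outside `A`. -/
def InKnnPlus {V : Type*} (n : ℕ) (G : SimpleGraph V) : Prop :=
  ∃ A : Set V, A.ncard = n ∧ (∀ a ∈ A, ∀ b ∈ A, ¬ G.Adj a b) ∧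
    ∀ a ∈ A, ∀ b ∉ A, G.Adj a b

/-- `M` is a perfect matching of the subgraph of `G` induced by the vertex set `T`. -/
def IsPMOn {V : Type*} (G : SimpleGraph V) (T : Set V) (M : Set (Sym2 V)) : Prop :=
  M ⊆ G.edgeSet ∧ (∀ e ∈ M, ∀ w : V, w ∈ e → w ∈ T) ∧
  (∀ e ∈ M, ∀ f ∈ M, e ≠ f → ∀ v : V, v ∈ e → v ∉ f) ∧
  (∀ w ∈ T, ∃ e ∈ M, w ∈ e)

/-- The forcing number of the perfect matching `M` of the subgraph of `G`
induced by the vertex set `T`. -/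
noncomputable def forcingNumOn {V : Type*} (G : SimpleGraph V) (T : Set V)
    (M : Set (Sym2 V)) : ℕ :=
  sInf {k | ∃ S, S ⊆ M ∧ (∀ M', IsPMOn G T M' → S ⊆ M' → M' = M) ∧ S.ncard = k}

/-- `{i,j}` is one of the `k` special pairs `{2t, 2t+1}` (0-indexed), `t < k`. -/
def pairIdx (k : ℕ) {n : ℕ} (i j : Fin n) : Prop :=
  ∃ t, t < k ∧ ((i.val = 2 * t ∧ j.val = 2 * t + 1) ∨ (j.val = 2 * t ∧ i.val = 2 * t + 1))

/-- The graph `H_k` on vertices `u_0,…,u_{n-1}` (left copy) and `v_0,…,v_{n-1}`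
(right copy): edges `u_i v_i` for all `i`; `u_{2t} u_{2t+1}` and `v_{2t} v_{2t+1}`
for `t < k`; and `u_i v_j`, `u_j v_i` for every pair `i ≠ j` that is not one of the
`k` special pairs. -/
def Hgraph (n k : ℕ) : SimpleGraph (Fin n ⊕ Fin n) :=
  SimpleGraph.fromRel (fun x y =>
    match x, y with
    | Sum.inl i, Sum.inr j => i = j ∨ ¬ pairIdx k i j
    | Sum.inl i, Sum.inl j => pairIdx k i j
    | Sum.inr i, Sum.inr j => pairIdx k i j
    | Sum.inr _, Sum.inl _ => False)

/-- The perfect matching `M₀ = {u_i v_i : i}` of `H_k`. -/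
def M0 (n : ℕ) : Set (Sym2 (Fin n ⊕ Fin n)) :=
  {e | ∃ i : Fin n, e = s(Sum.inl i, Sum.inr i)}

set_option linter.unusedSectionVars false

section Helpers
variable {V : Type*} {G : SimpleGraph V} {M M' M'' : Set (Sym2 V)}

lemma IsPM.edge_unique (hM : IsPM G M) {e f : Sym2 V} {v : V}
    (he : e ∈ M) (hf : f ∈ M) (hve : v ∈ e) (hvf : v ∈ f) : e = f := by
  by_contra h
  exact hM.2.1 e he f hf h v hve hvf

lemma IsPM.exists_partner (hM : IsPM G M) (v : V) : ∃ w, s(v, w) ∈ M := by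
  obtain ⟨e, heM, hve⟩ := hM.2.2 v
  obtain ⟨w, rfl⟩ := Sym2.mem_iff_exists.1 hve
  exact ⟨w, heM⟩

lemma IsPM.adj' (hM : IsPM G M) {a b : V} (h : s(a,b) ∈ M) : G.Adj a b :=
  (SimpleGraph.mem_edgeSet G).1 (hM.1 h)

lemma IsPM.ne' (hM : IsPM G M) {a b : V} (h : s(a,b) ∈ M) : a ≠ b :=
  (hM.adj' h).ne

lemma IsPM.partner_unique (hM : IsPM G M) {v w w' : V}
    (h : s(v,w) ∈ M) (h' : s(v,w') ∈ M) : w = w' :=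
  Sym2.congr_right.1 (hM.edge_unique (v := v) h h' (by simp) (by simp))

lemma IsPM.eq_of_subset (hM : IsPM G M) (hM' : IsPM G M') (h : M ⊆ M') : M' = M := by
  ext f
  refine ⟨fun hf => ?_, fun hf => h hf⟩
  induction f using Sym2.ind with
  | _ a b =>
    obtain ⟨g, hgM, hag⟩ := hM.2.2 a
    have : s(a,b) = g := hM'.edge_unique hf (h hgM) (by simp) hag
    exact this ▸ hgM

/-- endpoints of distinct M-edges are pairwise distinct -/
lemma IsPM.endpoints_distinct (hM : IsPM G M) {u v x y : V}
    (h1 : s(u,v) ∈ M) (h2 : s(x,y) ∈ M) (hne : s(u,v) ≠ s(x,y)) :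
    u ≠ x ∧ u ≠ y ∧ v ≠ x ∧ v ≠ y := by
  refine ⟨?_, ?_, ?_, ?_⟩
  · rintro rfl; exact hne (hM.edge_unique (v := u) h1 h2 (by simp) (by simp))
  · rintro rfl; exact hne (hM.edge_unique (v := u) h1 h2 (by simp) (by simp))
  · rintro rfl; exact hne (hM.edge_unique (v := v) h1 h2 (by simp) (by simp))
  · rintro rfl; exact hne (hM.edge_unique (v := v) h1 h2 (by simp) (by simp))

lemma IsPM.ncard_eq [Fintype V] {n : ℕ} (hM : IsPM G M) (hcard : Fintype.card V = 2 * n) :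
    M.ncard = n := by
  classical
  have hfin : M.Finite := Set.toFinite M
  set t := hfin.toFinset with ht
  have hpart : ∀ v : V, ∃ w, s(v, w) ∈ M := hM.exists_partner
  choose p hp using hpart
  set φ : V → Sym2 V := fun v => s(v, p v) with hφ
  have hmemfib : ∀ v : V, ∀ e ∈ M, (φ v = e ↔ v ∈ e) := by
    intro v e he
    constructor
    · rintro rfl; simp [φ]
    · intro hv; exact hM.edge_unique (hp v) he (by simp [φ]) hv
  have hsum : Fintype.card V = ∑ e ∈ t, (Finset.univ.filter (fun v => φ v = e)).card := by
    rw [← Finset.card_univ]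
    apply Finset.card_eq_sum_card_fiberwise
    intro v _
    simpa [ht, Set.Finite.mem_toFinset] using hp v
  have hfib : ∀ e ∈ t, (Finset.univ.filter (fun v => φ v = e)).card = 2 := by
    intro e he
    have heM : e ∈ M := by simpa [ht, Set.Finite.mem_toFinset] using he
    induction e using Sym2.ind with
    | _ a b =>
      have hab : a ≠ b := hM.ne' heM
      have : Finset.univ.filter (fun v => φ v = s(a,b)) = {a, b} := by
        ext v
        simp only [Finset.mem_filter, Finset.mem_univ, true_and, Finset.mem_insert,
          Finset.mem_singleton]
        rw [hmemfib v _ heM, Sym2.mem_iff]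
      rw [this, Finset.card_pair hab]
  have : Fintype.card V = 2 * t.card := by
    rw [hsum, Finset.sum_congr rfl hfib, Finset.sum_const, smul_eq_mul, mul_comm]
  rw [Set.ncard_eq_toFinset_card M hfin, ← ht]
  omega

end Helpers

section Forcing
variable {V : Type*} {G : SimpleGraph V} {M M' M'' : Set (Sym2 V)}

lemma cover_in_T (hM : IsPM G M) (hM'' : IsPM G M'') {T : Set (Sym2 V)}
    (hsub : M \ T ⊆ M'') {p w : V} (hpw : s(p,w) ∈ M'')
    (hp : ∀ h ∈ M, p ∈ h → h ∈ T) : ∀ h ∈ M, w ∈ h → h ∈ T := by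
  intro h hhM hwh
  by_contra hhT
  have hhM'' : h ∈ M'' := hsub ⟨hhM, hhT⟩
  have hne : s(p,w) ≠ h := by
    rintro rfl
    exact hhT (hp _ hhM (by simp))
  exact hM''.2.1 _ hpw _ hhM'' hne w (by simp) hwh

lemma forcing_erase (hM : IsPM G M) {u v : V} (huv : s(u,v) ∈ M) :
    IsForcingSet G M (M \ {s(u,v)}) := by
  refine ⟨Set.diff_subset, fun M'' hM'' hsub => ?_⟩
  obtain ⟨w, hw⟩ := hM''.exists_partner u
  have hcov : ∀ h ∈ M, w ∈ h → h ∈ ({s(u,v)} : Set (Sym2 V)) := by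
    apply cover_in_T hM hM'' hsub hw
    intro h hhM huh
    exact hM.edge_unique (v := u) hhM huv huh (by simp)
  obtain ⟨h₀, hh₀, hwh₀⟩ := hM.2.2 w
  have h₀eq : h₀ = s(u,v) := hcov h₀ hh₀ hwh₀
  have hwuv : w = u ∨ w = v := by
    rw [h₀eq] at hwh₀; simpa using hwh₀
  have hwv : w = v := by
    rcases hwuv with h | h
    · exact absurd h.symm (hM''.ne' hw)
    · exact h
  rw [hwv] at hw
  have hMsub : M ⊆ M'' := by
    intro g hg
    by_cases hgf : g = s(u,v)
    · exact hgf ▸ hw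
    · exact hsub ⟨hg, hgf⟩
  exact hM.eq_of_subset hM'' hMsub

lemma forcing_erase_two (hM : IsPM G M) {u v x y : V}
    (h1 : s(u,v) ∈ M) (h2 : s(x,y) ∈ M) (hne : s(u,v) ≠ s(x,y))
    (hbad1 : ¬(G.Adj u x ∧ G.Adj v y)) (hbad2 : ¬(G.Adj u y ∧ G.Adj v x)) :
    IsForcingSet G M (M \ {s(u,v), s(x,y)}) := by
  obtain ⟨hux, huy, hvx, hvy⟩ := hM.endpoints_distinct h1 h2 hne
  have huv : u ≠ v := hM.ne' h1
  have hxy : x ≠ y := hM.ne' h2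
  refine ⟨Set.diff_subset, fun M'' hM'' hsub => ?_⟩
  set T : Set (Sym2 V) := {s(u,v), s(x,y)} with hT
  have hcovu : ∀ h ∈ M, u ∈ h → h ∈ T := fun h hh huh =>
    Or.inl (hM.edge_unique (v := u) hh h1 huh (by simp))
  have hcovv : ∀ h ∈ M, v ∈ h → h ∈ T := fun h hh hvh =>
    Or.inl (hM.edge_unique (v := v) hh h1 hvh (by simp))
  have hcovx : ∀ h ∈ M, x ∈ h → h ∈ T := fun h hh hxh =>
    Or.inr (hM.edge_unique (v := x) hh h2 hxh (by simp))
  have key : ∀ p w : V, s(p,w) ∈ M'' → (∀ h ∈ M, p ∈ h → h ∈ T) →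
      (w = u ∨ w = v) ∨ (w = x ∨ w = y) := by
    intro p w hpw hp
    have hcov := cover_in_T hM hM'' hsub hpw hp
    obtain ⟨h₀, hh₀, hwh₀⟩ := hM.2.2 w
    rcases hcov h₀ hh₀ hwh₀ with h | h <;> rw [h] at hwh₀
    · left; simpa using hwh₀
    · right; simpa using hwh₀
  obtain ⟨w, hw⟩ := hM''.exists_partner u
  have finish : s(u,v) ∈ M'' → s(x,y) ∈ M'' → M'' = M := by
    intro huvM hxyM
    have hMsub : M ⊆ M'' := by
      intro g hg
      by_cases hgf : g = s(u,v)
      · exact hgf ▸ huvM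
      by_cases hgf2 : g = s(x,y)
      · exact hgf2 ▸ hxyM
      · refine hsub ⟨hg, ?_⟩
        simp only [hT, Set.mem_insert_iff, Set.mem_singleton_iff]
        tauto
    exact hM.eq_of_subset hM'' hMsub
  rcases key u w hw hcovu with (hwu | hwv) | (hwx | hwy)
  · exact absurd hwu.symm (hM''.ne' hw)
  · -- w = v : s(u,v) ∈ M''
    rw [hwv] at hw
    obtain ⟨z, hz⟩ := hM''.exists_partner x
    rcases key x z hz hcovx with (hzu | hzv) | (hzx | hzy)
    · rw [hzu] at hz
      rw [Sym2.eq_swap] at hz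
      exact absurd (hM''.partner_unique hw hz) hvx
    · rw [hzv] at hz
      rw [Sym2.eq_swap] at hz
      rw [Sym2.eq_swap] at hw
      exact absurd (hM''.partner_unique hw hz) hux
    · exact absurd hzx.symm (hM''.ne' hz)
    · rw [hzy] at hz
      exact finish hw hz
  · -- w = x : then v is matched to y, contradicting hbad1
    rw [hwx] at hw
    exfalso
    obtain ⟨z, hz⟩ := hM''.exists_partner v
    rcases key v z hz hcovv with (hzu | hzv) | (hzx | hzy)
    · rw [hzu, Sym2.eq_swap] at hz
      exact hvx ((hM''.partner_unique hz hw).symm ▸ rfl : v = x) |>.elim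
    · exact absurd hzv.symm (hM''.ne' hz)
    · rw [hzx, Sym2.eq_swap] at hz
      rw [Sym2.eq_swap] at hw
      exact huv (hM''.partner_unique hw hz)
    · rw [hzy] at hz
      exact hbad1 ⟨hM''.adj' hw, hM''.adj' hz⟩
  · -- w = y : then v is matched to x, contradicting hbad2
    rw [hwy] at hw
    exfalso
    obtain ⟨z, hz⟩ := hM''.exists_partner v
    rcases key v z hz hcovv with (hzu | hzv) | (hzx | hzy)
    · rw [hzu, Sym2.eq_swap] at hz
      exact hvy (hM''.partner_unique hz hw)
    · exact absurd hzv.symm (hM''.ne' hz)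
    · rw [hzx] at hz
      exact hbad2 ⟨hM''.adj' hw, hM''.adj' hz⟩
    · rw [hzy, Sym2.eq_swap] at hz
      rw [Sym2.eq_swap] at hw
      exact huv (hM''.partner_unique hw hz)
end Forcing

section Swap
variable {V : Type*} {G : SimpleGraph V} {M M'' : Set (Sym2 V)}

lemma not_mem_of_partner (hM : IsPM G M) {u v x : V} (h1 : s(u,v) ∈ M) (hxv : x ≠ v) :
    s(u,x) ∉ M := fun h => hxv (hM.partner_unique h h1)

lemma swap_isPM (hM : IsPM G M) {u v x y : V}
    (h1 : s(u,v) ∈ M) (h2 : s(x,y) ∈ M) (hne : s(u,v) ≠ s(x,y))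
    (hux : G.Adj u x) (hvy : G.Adj v y) :
    IsPM G ((M \ {s(u,v), s(x,y)}) ∪ {s(u,x), s(v,y)}) := by
  obtain ⟨hux', huy', hvx', hvy'⟩ := hM.endpoints_distinct h1 h2 hne
  have huv : u ≠ v := hM.ne' h1
  have hxy : x ≠ y := hM.ne' h2
  constructor
  · rintro f (⟨hf, -⟩ | hf)
    · exact hM.1 hf
    · rcases hf with rfl | rfl
      · exact hux
      · exact hvy
  constructor
  · -- pairwise disjoint
    have hold : ∀ g ∈ M \ ({s(u,v), s(x,y)} : Set (Sym2 V)), u ∉ g ∧ v ∉ g ∧ x ∉ g ∧ y ∉ g := by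
      rintro g ⟨hg, hgT⟩
      simp only [Set.mem_insert_iff, Set.mem_singleton_iff] at hgT
      push_neg at hgT
      refine ⟨fun h => hgT.1 ?_, fun h => hgT.1 ?_, fun h => hgT.2 ?_, fun h => hgT.2 ?_⟩
      · exact hM.edge_unique (v := u) hg h1 h (by simp)
      · exact hM.edge_unique (v := v) hg h1 h (by simp)
      · exact hM.edge_unique (v := x) hg h2 h (by simp)
      · exact hM.edge_unique (v := y) hg h2 h (by simp)
    have hnewold : ∀ g ∈ M \ ({s(u,v), s(x,y)} : Set (Sym2 V)), ∀ w : V,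
        (w ∈ s(u,x) ∨ w ∈ s(v,y)) → w ∉ g := by
      intro g hg w hw hwg
      obtain ⟨hu, hv, hx, hy⟩ := hold g hg
      rcases hw with hw | hw <;> simp only [Sym2.mem_iff] at hw <;> rcases hw with h | h <;>
        rw [h] at hwg
      · exact hu hwg
      · exact hx hwg
      · exact hv hwg
      · exact hy hwg
    rintro e (⟨heM, heT⟩ | he) f (⟨hfM, hfT⟩ | hf) hef w hwe hwf
    · exact hM.2.1 e heM f hfM hef w hwe hwf
    · exact hnewold e ⟨heM, heT⟩ w (by rcases hf with rfl | rfl; exacts [Or.inl hwf, Or.inr hwf]) hwe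
    · exact hnewold f ⟨hfM, hfT⟩ w (by rcases he with rfl | rfl; exacts [Or.inl hwe, Or.inr hwe]) hwf
    · rcases he with rfl | rfl <;> rcases hf with rfl | rfl
      · exact absurd rfl hef
      · simp only [Sym2.mem_iff] at hwe hwf
        rcases hwe with h | h <;> rcases hwf with h' | h' <;> rw [h] at h'
        · exact huv h'
        · exact huy' h'
        · exact hvx' h'.symm
        · exact hxy h'
      · simp only [Sym2.mem_iff] at hwe hwf
        rcases hwe with h | h <;> rcases hwf with h' | h' <;> rw [h] at h'
        · exact huv h'.symm
        · exact hvx' h'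
        · exact huy' h'.symm
        · exact hxy h'.symm
      · exact absurd rfl hef
  · -- cover
    intro w
    obtain ⟨m, hm, hwm⟩ := hM.2.2 w
    by_cases hmf : m = s(u,v)
    · rw [hmf] at hwm
      simp only [Sym2.mem_iff] at hwm
      rcases hwm with h | h
      · exact ⟨s(u,x), Or.inr (by simp), by rw [h]; simp⟩
      · exact ⟨s(v,y), Or.inr (by simp), by rw [h]; simp⟩
    by_cases hmf2 : m = s(x,y)
    · rw [hmf2] at hwm
      simp only [Sym2.mem_iff] at hwm
      rcases hwm with h | h
      · exact ⟨s(u,x), Or.inr (by simp), by rw [h]; simp⟩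
      · exact ⟨s(v,y), Or.inr (by simp), by rw [h]; simp⟩
    · exact ⟨m, Or.inl ⟨hm, by simp [hmf, hmf2]⟩, hwm⟩

end Swap

section LemmaA
variable {V : Type*} [Fintype V] {G : SimpleGraph V} {M : Set (Sym2 V)} {n : ℕ}

lemma forcingNum_le_ncard (hM : IsPM G M) : forcingNum G M ≤ M.ncard :=
  Nat.sInf_le ⟨M, ⟨subset_rfl, fun M3 h3 hsub => hM.eq_of_subset h3 hsub⟩, rfl⟩

/-- If every pair of distinct `M`-edges spans at least one alternating pair of
cross edges, then the forcing number is exactly `n - 1`. -/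
lemma lemmaA_ge (hn : 2 ≤ n) (hcard : Fintype.card V = 2 * n) (hM : IsPM G M)
    (hgood : ∀ u v x y : V, s(u,v) ∈ M → s(x,y) ∈ M → s(u,v) ≠ s(x,y) →
      (G.Adj u x ∧ G.Adj v y) ∨ (G.Adj u y ∧ G.Adj v x)) :
    forcingNum G M = n - 1 := by
  have hcardM : M.ncard = n := hM.ncard_eq hcard
  have hfinM : M.Finite := Set.toFinite M
  have hV : Nonempty V := Fintype.card_pos_iff.mp (by omega)
  obtain ⟨v₀⟩ := hV
  obtain ⟨w₀, hw₀⟩ := hM.exists_partner v₀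
  have hmem : n - 1 ∈ {k | ∃ S, IsForcingSet G M S ∧ S.ncard = k} :=
    ⟨M \ {s(v₀,w₀)}, forcing_erase hM hw₀, by
      rw [Set.ncard_diff_singleton_of_mem hw₀, hcardM]⟩
  have hlow : ∀ k ∈ {k | ∃ S, IsForcingSet G M S ∧ S.ncard = k}, n - 1 ≤ k := by
    rintro k ⟨S, ⟨hSM, hSforce⟩, rfl⟩
    by_contra hcon
    have hSn : S.ncard ≤ n - 2 := by omega
    have hdiff : 1 < (M \ S).ncard := by
      rw [Set.ncard_diff hSM]
      omega
    obtain ⟨f1, f2, hf1, hf2, hf12⟩ := (Set.one_lt_ncard_iff (Set.toFinite _)).mp hdiff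
    induction f1 using Sym2.ind with
    | _ u v =>
    induction f2 using Sym2.ind with
    | _ x y =>
    have h1 : s(u,v) ∈ M := hf1.1
    have h2 : s(x,y) ∈ M := hf2.1
    obtain ⟨hux', huy', hvx', hvy'⟩ := hM.endpoints_distinct h1 h2 hf12
    have hSsub : S ⊆ M \ {s(u,v), s(x,y)} := by
      intro g hg
      refine ⟨hSM hg, ?_⟩
      simp only [Set.mem_insert_iff, Set.mem_singleton_iff]
      rintro (rfl | rfl)
      · exact hf1.2 hg
      · exact hf2.2 hg
    rcases hgood u v x y h1 h2 hf12 with ⟨hux, hvy⟩ | ⟨huy, hvx⟩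
    · have hPM := swap_isPM hM h1 h2 hf12 hux hvy
      have heq := hSforce _ hPM (hSsub.trans Set.subset_union_left)
      have : s(u,x) ∈ M := by
        rw [← heq]; exact Or.inr (by simp)
      exact not_mem_of_partner hM h1 (fun h => hvx' h.symm) this
    · have h2' : s(y,x) ∈ M := by rw [Sym2.eq_swap (a := y) (b := x)]; exact h2
      have hne' : s(u,v) ≠ s(y,x) := by rw [Sym2.eq_swap (a := y) (b := x)]; exact hf12
      have hPM := swap_isPM hM h1 h2' hne' huy hvx
      have hSsub' : S ⊆ M \ {s(u,v), s(y,x)} := by rw [Sym2.eq_swap (a := y) (b := x)]; exact hSsub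
      have heq := hSforce _ hPM (hSsub'.trans Set.subset_union_left)
      have : s(u,y) ∈ M := by
        rw [← heq]; exact Or.inr (by simp)
      exact not_mem_of_partner hM h1 (fun h => hvy' h.symm) this
  exact le_antisymm (Nat.sInf_le hmem) (le_csInf ⟨_, hmem⟩ hlow)

/-- If some pair of distinct `M`-edges spans no alternating pair of cross edges,
then the forcing number is at most `n - 2`. -/
lemma lemmaA_bad (hcard : Fintype.card V = 2 * n) (hM : IsPM G M)
    {u v x y : V} (h1 : s(u,v) ∈ M) (h2 : s(x,y) ∈ M) (hne : s(u,v) ≠ s(x,y))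
    (hbad1 : ¬(G.Adj u x ∧ G.Adj v y)) (hbad2 : ¬(G.Adj u y ∧ G.Adj v x)) :
    forcingNum G M ≤ n - 2 := by
  have hcardM : M.ncard = n := hM.ncard_eq hcard
  have hfinM : M.Finite := Set.toFinite M
  have hsub : ({s(u,v), s(x,y)} : Set (Sym2 V)) ⊆ M := by
    rintro g (rfl | rfl)
    · exact h1
    · exact h2
  refine Nat.sInf_le ⟨M \ {s(u,v), s(x,y)}, forcing_erase_two hM h1 h2 hne hbad1 hbad2, ?_⟩
  rw [Set.ncard_diff hsub, Set.ncard_pair hne, hcardM]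

lemma lemmaA_iff (hn : 2 ≤ n) (hcard : Fintype.card V = 2 * n) (hM : IsPM G M) :
    forcingNum G M = n - 1 ↔
    ∀ u v x y : V, s(u,v) ∈ M → s(x,y) ∈ M → s(u,v) ≠ s(x,y) →
      (G.Adj u x ∧ G.Adj v y) ∨ (G.Adj u y ∧ G.Adj v x) := by
  constructor
  · intro hf u v x y h1 h2 hne
    by_contra hbad
    rw [not_or] at hbad
    have := lemmaA_bad hcard hM h1 h2 hne hbad.1 hbad.2
    omega
  · exact lemmaA_ge hn hcard hM

end LemmaA

section Glue
variable {V : Type*} {G : SimpleGraph V} {M N : Set (Sym2 V)}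

lemma isPM_deleteEdges {c : Sym2 V} :
    IsPM (G.deleteEdges {c}) N ↔ IsPM G N ∧ c ∉ N := by
  unfold IsPM
  rw [SimpleGraph.edgeSet_deleteEdges]
  constructor
  · rintro ⟨h1, h2, h3⟩
    exact ⟨⟨fun f hf => (h1 hf).1, h2, h3⟩, fun hc => (h1 hc).2 rfl⟩
  · rintro ⟨⟨h1, h2, h3⟩, hc⟩
    refine ⟨fun f hf => ⟨h1 hf, fun h => ?_⟩, h2, h3⟩
    rw [Set.mem_singleton_iff] at h
    exact hc (h ▸ hf)

lemma adj_deleteEdges {c : Sym2 V} {a b : V} (h : G.Adj a b) (hne : s(a,b) ≠ c) :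
    (G.deleteEdges {c}).Adj a b := by
  rw [SimpleGraph.deleteEdges_adj]
  exact ⟨h, by simpa using hne⟩

lemma maxForcing_le {m : ℕ} (h : ∀ N, IsPM G N → forcingNum G N ≤ m) :
    maxForcing G ≤ m :=
  csSup_le' (by rintro k ⟨N, hN, rfl⟩; exact h N hN)

lemma le_maxForcing [Fintype V] {n : ℕ} (hcard : Fintype.card V = 2 * n)
    (hN : IsPM G N) : forcingNum G N ≤ maxForcing G := by
  apply le_csSup
  · refine ⟨n, ?_⟩
    rintro k ⟨N', hN', rfl⟩
    calc forcingNum G N' ≤ N'.ncard := forcingNum_le_ncard hN'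
    _ = n := hN'.ncard_eq hcard
  · exact ⟨N, hN, rfl⟩

lemma cross_goal {H : SimpleGraph V} {p q r s u v x y : V}
    (h1 : s(p,q) = s(u,v)) (h2 : s(r,s) = s(x,y))
    (hux : H.Adj u x) (hvy : H.Adj v y) :
    (H.Adj p r ∧ H.Adj q s) ∨ (H.Adj p s ∧ H.Adj q r) := by
  rw [Sym2.eq_iff] at h1 h2
  rcases h1 with ⟨rfl, rfl⟩ | ⟨rfl, rfl⟩ <;> rcases h2 with ⟨rfl, rfl⟩ | ⟨rfl, rfl⟩ <;> tauto

lemma eq_c_case (hM : IsPM G M) {p q r s u v x y : V}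
    (hp : s(p,q) ∈ M) (hr : s(r,s) ∈ M) (huv : s(u,v) ∈ M) (hxy : s(x,y) ∈ M)
    (h : s(p,r) = s(u,y)) :
    (s(p,q) = s(u,v) ∧ s(r,s) = s(x,y)) ∨ (s(p,q) = s(x,y) ∧ s(r,s) = s(u,v)) := by
  rw [Sym2.eq_iff] at h
  rcases h with ⟨h1, h2⟩ | ⟨h1, h2⟩
  · left
    constructor
    · exact hM.edge_unique (v := u) hp huv (h1 ▸ (by simp)) (by simp)
    · exact hM.edge_unique (v := y) hr hxy (h2 ▸ (by simp)) (by simp)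
  · right
    constructor
    · exact hM.edge_unique (v := y) hp hxy (h1 ▸ (by simp)) (by simp)
    · exact hM.edge_unique (v := u) hr huv (h2 ▸ (by simp)) (by simp)

end Glue

section Survive
variable {V : Type*} {G : SimpleGraph V} {M : Set (Sym2 V)}

/-- Deleting the cross edge `s(u,y)` keeps every pair of distinct `M`-edges
alternating, provided the cross pair `u-x, v-y` is present. -/
lemma survive (hM : IsPM G M) {u v x y : V}
    (huv : s(u,v) ∈ M) (hxy : s(x,y) ∈ M) (hne : s(u,v) ≠ s(x,y))
    (hux : G.Adj u x) (hvy : G.Adj v y)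
    (hgood : ∀ p q r t : V, s(p,q) ∈ M → s(r,t) ∈ M → s(p,q) ≠ s(r,t) →
      (G.Adj p r ∧ G.Adj q t) ∨ (G.Adj p t ∧ G.Adj q r)) :
    ∀ p q r t : V, s(p,q) ∈ M → s(r,t) ∈ M → s(p,q) ≠ s(r,t) →
      ((G.deleteEdges {s(u,y)}).Adj p r ∧ (G.deleteEdges {s(u,y)}).Adj q t) ∨
      ((G.deleteEdges {s(u,y)}).Adj p t ∧ (G.deleteEdges {s(u,y)}).Adj q r) := by
  obtain ⟨hux', huy', hvx', hvy'⟩ := hM.endpoints_distinct huv hxy hne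
  have huvne : u ≠ v := hM.ne' huv
  have hxyne : x ≠ y := hM.ne' hxy
  have sw : ∀ (a b : V) (z : Sym2 V), s(a,b) = z → s(b,a) = z := by
    intro a b z h; rw [Sym2.eq_swap]; exact h
  have hAux : (G.deleteEdges {s(u,y)}).Adj u x := by
    apply adj_deleteEdges hux
    intro hcc
    rw [Sym2.eq_iff] at hcc
    rcases hcc with ⟨-, h⟩ | ⟨h, -⟩
    · exact hxyne h
    · exact huy' h
  have hAvy : (G.deleteEdges {s(u,y)}).Adj v y := by
    apply adj_deleteEdges hvy
    intro hcc
    rw [Sym2.eq_iff] at hcc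
    rcases hcc with ⟨h, -⟩ | ⟨-, h⟩
    · exact huvne h.symm
    · exact huy' h.symm
  intro p q r t hp hr hne'
  have concl : (s(p,q) = s(u,v) ∧ s(r,t) = s(x,y)) ∨ (s(p,q) = s(x,y) ∧ s(r,t) = s(u,v)) →
      ((G.deleteEdges {s(u,y)}).Adj p r ∧ (G.deleteEdges {s(u,y)}).Adj q t) ∨
      ((G.deleteEdges {s(u,y)}).Adj p t ∧ (G.deleteEdges {s(u,y)}).Adj q r) := by
    rintro (⟨hA, hB⟩ | ⟨hA, hB⟩)
    · exact cross_goal hA hB hAux hAvy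
    · exact cross_goal hA hB hAux.symm hAvy.symm
  rcases hgood p q r t hp hr hne' with ⟨h1, h2⟩ | ⟨h1, h2⟩
  · by_cases e1 : s(p,r) = s(u,y)
    · exact concl (eq_c_case hM hp hr huv hxy e1)
    by_cases e2 : s(q,t) = s(u,y)
    · have hp' : s(q,p) ∈ M := sw p q _ rfl ▸ hp
      have hr' : s(t,r) ∈ M := sw r t _ rfl ▸ hr
      rcases eq_c_case hM hp' hr' huv hxy e2 with ⟨hA, hB⟩ | ⟨hA, hB⟩
      · exact concl (Or.inl ⟨sw q p _ hA, sw t r _ hB⟩)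
      · exact concl (Or.inr ⟨sw q p _ hA, sw t r _ hB⟩)
    · exact Or.inl ⟨adj_deleteEdges h1 e1, adj_deleteEdges h2 e2⟩
  · by_cases e1 : s(p,t) = s(u,y)
    · have hr' : s(t,r) ∈ M := sw r t _ rfl ▸ hr
      rcases eq_c_case hM hp hr' huv hxy e1 with ⟨hA, hB⟩ | ⟨hA, hB⟩
      · exact concl (Or.inl ⟨hA, sw t r _ hB⟩)
      · exact concl (Or.inr ⟨hA, sw t r _ hB⟩)
    by_cases e2 : s(q,r) = s(u,y)
    · have hp' : s(q,p) ∈ M := sw p q _ rfl ▸ hp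
      rcases eq_c_case hM hp' hr huv hxy e2 with ⟨hA, hB⟩ | ⟨hA, hB⟩
      · exact concl (Or.inl ⟨sw q p _ hA, hB⟩)
      · exact concl (Or.inr ⟨sw q p _ hA, hB⟩)
    · exact Or.inr ⟨adj_deleteEdges h1 e1, adj_deleteEdges h2 e2⟩
end Survive


section Exact
variable {V : Type*} {G : SimpleGraph V} {M : Set (Sym2 V)}

lemma exact_helper (hM : IsPM G M)
    (hR : ∀ u v x y : V, s(u,v) ∈ M → s(x,y) ∈ M → s(u,v) ≠ s(x,y) →
        ((G.Adj u x ∧ G.Adj v y ∧ ¬G.Adj u y ∧ ¬G.Adj v x) ∨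
         (G.Adj u y ∧ G.Adj v x ∧ ¬G.Adj u x ∧ ¬G.Adj v y)))
    {a b a' b' : V} (hab : G.Adj a b) (hnM : s(a,b) ∉ M)
    (ha : s(a,a') ∈ M) (hb : s(b,b') ∈ M) :
    ¬G.Adj a b' ∧ ¬G.Adj a' b ∧ G.Adj a' b' := by
  have hne : s(a,a') ≠ s(b,b') := by
    intro h
    rw [Sym2.eq_iff] at h
    rcases h with ⟨h1, -⟩ | ⟨-, h2⟩
    · exact hab.ne h1
    · exact hnM (by rw [← h2]; exact ha)
  rcases hR a a' b b' ha hb hne with ⟨-, h2, h3, h4⟩ | ⟨-, -, h3, -⟩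
  · exact ⟨h3, h4, h2⟩
  · exact absurd hab h3

end Exact

theorem stmt1' {V : Type*} [Fintype V] (n : ℕ) (hn : 2 ≤ n)
    (G : SimpleGraph V) (hcard : Fintype.card V = 2 * n)
    (M : Set (Sym2 V)) (hM : IsPM G M) (hf : forcingNum G M = n - 1) :
    (∀ e ∈ G.edgeSet, maxForcing (G.deleteEdges {e}) ≤ n - 2) ↔
      ∀ u v x y : V, s(u, v) ∈ M → s(x, y) ∈ M → s(u, v) ≠ s(x, y) →
        ((G.Adj u x ∧ G.Adj v y ∧ ¬ G.Adj u y ∧ ¬ G.Adj v x) ∨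
         (G.Adj u y ∧ G.Adj v x ∧ ¬ G.Adj u x ∧ ¬ G.Adj v y)) := by
  have hgood := (lemmaA_iff hn hcard hM).mp hf
  constructor
  · -- minimality implies the exact 4-cycle condition
    intro hmin u v x y huv hxy hne
    obtain ⟨hux', huy', hvx', hvy'⟩ := hM.endpoints_distinct huv hxy hne
    have huv' : s(v,u) ∈ M := by rw [Sym2.eq_swap]; exact huv
    have hxy' : s(y,x) ∈ M := by rw [Sym2.eq_swap]; exact hxy
    have hdel : ∀ c : Sym2 V, c ∈ G.edgeSet → c ∉ M →
        (∀ p q r t : V, s(p,q) ∈ M → s(r,t) ∈ M → s(p,q) ≠ s(r,t) →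
          ((G.deleteEdges {c}).Adj p r ∧ (G.deleteEdges {c}).Adj q t) ∨
          ((G.deleteEdges {c}).Adj p t ∧ (G.deleteEdges {c}).Adj q r)) → False := by
      intro c hcE hcM hgood'
      have hMdel : IsPM (G.deleteEdges {c}) M := isPM_deleteEdges.mpr ⟨hM, hcM⟩
      have hfdel := lemmaA_ge hn hcard hMdel hgood'
      have h1 := le_maxForcing hcard hMdel
      have h2 := hmin c hcE
      omega
    rcases hgood u v x y huv hxy hne with ⟨hux, hvy⟩ | ⟨huy, hvx⟩
    · have hnuy : ¬ G.Adj u y := fun huy =>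
        hdel s(u,y) huy (fun h => hvy' (hM.partner_unique h huv).symm)
          (survive hM huv hxy hne hux hvy hgood)
      have hnvx : ¬ G.Adj v x := by
        intro hvx
        refine hdel s(v,x) hvx (fun h => hux' (hM.partner_unique h huv').symm) ?_
        have hne2 : s(v,u) ≠ s(y,x) := by
          rw [Sym2.eq_swap (a := v) (b := u), Sym2.eq_swap (a := y) (b := x)]; exact hne
        exact survive hM huv' hxy' hne2 hvy hux hgood
      exact Or.inl ⟨hux, hvy, hnuy, hnvx⟩
    · have hnux : ¬ G.Adj u x := by
        intro hux
        refine hdel s(u,x) hux (fun h => hvx' (hM.partner_unique h huv).symm) ?_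
        have hne2 : s(u,v) ≠ s(y,x) := by
          rw [Sym2.eq_swap (a := y) (b := x)]; exact hne
        exact survive hM huv hxy' hne2 huy hvx hgood
      have hnvy : ¬ G.Adj v y := by
        intro hvy
        refine hdel s(v,y) hvy (fun h => huy' (hM.partner_unique h huv').symm) ?_
        have hne2 : s(v,u) ≠ s(x,y) := by
          rw [Sym2.eq_swap (a := v) (b := u)]; exact hne
        exact survive hM huv' hxy hne2 hvx huy hgood
      exact Or.inr ⟨huy, hvx, hnux, hnvy⟩
  · -- the exact 4-cycle condition implies minimality
    intro hexact e heE
    apply maxForcing_le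
    intro N hNdel
    obtain ⟨hN, heN⟩ := isPM_deleteEdges.mp hNdel
    induction e using Sym2.ind with
    | _ ex ey =>
    have hadj : G.Adj ex ey := (SimpleGraph.mem_edgeSet G).mp heE
    have hexy : ex ≠ ey := hadj.ne
    have hdelself : ¬ (G.deleteEdges {s(ex,ey)}).Adj ex ey := by
      rw [SimpleGraph.deleteEdges_adj]
      rintro ⟨-, h⟩
      exact h rfl
    by_cases heM : s(ex,ey) ∈ M
    · -- Case I : the deleted edge is an M-edge
      have heM' : s(ey,ex) ∈ M := by rw [Sym2.eq_swap]; exact heM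
      obtain ⟨a, ha⟩ := hN.exists_partner ex
      obtain ⟨b, hb⟩ := hN.exists_partner ey
      have hane : a ≠ ey := fun h => heN (h ▸ ha)
      have hbne : b ≠ ex := by
        intro h
        apply heN
        rw [Sym2.eq_swap]
        exact h ▸ hb
      have hf1f2 : s(ex,a) ≠ s(ey,b) := by
        intro h
        rw [Sym2.eq_iff] at h
        rcases h with ⟨h1, -⟩ | ⟨-, h2⟩
        · exact hexy h1
        · exact hane h2
      -- ¬ G.Adj ex b
      have hGeyb : G.Adj ey b := hN.adj' hb
      have heybM : s(ey,b) ∉ M := fun h => hbne (hM.partner_unique h heM')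
      obtain ⟨b₀, hb₀⟩ := hM.exists_partner b
      have hnexb : ¬ G.Adj ex b := (exact_helper hM hexact hGeyb heybM heM' hb₀).2.1
      refine lemmaA_bad hcard hNdel ha hb hf1f2 ?_ ?_
      · rintro ⟨h, -⟩
        exact hdelself h
      · rintro ⟨h, -⟩
        rw [SimpleGraph.deleteEdges_adj] at h
        exact hnexb h.1
    · -- Case II : the deleted edge is a cross edge
      obtain ⟨px, hpx⟩ := hM.exists_partner ex
      obtain ⟨py, hpy⟩ := hM.exists_partner ey
      have hpxney : px ≠ ey := fun h => heM (h ▸ hpx)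
      have hpynex : py ≠ ex := by
        intro h
        apply heM
        rw [Sym2.eq_swap]
        exact h ▸ hpy
      have hMne : s(ex,px) ≠ s(ey,py) := by
        intro h
        rw [Sym2.eq_iff] at h
        rcases h with ⟨h1, -⟩ | ⟨h1, -⟩
        · exact hexy h1
        · exact hpynex h1.symm
      have EH := exact_helper hM hexact hadj heM hpx hpy
      by_cases hA : s(ex,px) ∈ N
      · by_cases hB : s(ey,py) ∈ N
        · -- II.A
          refine lemmaA_bad hcard hNdel hA hB hMne ?_ ?_
          · rintro ⟨h, -⟩
            exact hdelself h
          · rintro ⟨h, -⟩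
            rw [SimpleGraph.deleteEdges_adj] at h
            exact EH.1 h.1
        · -- II.B
          obtain ⟨b, hb⟩ := hN.exists_partner ey
          have hf1f2 : s(ex,px) ≠ s(ey,b) := by
            intro h
            rw [Sym2.eq_iff] at h
            rcases h with ⟨h1, -⟩ | ⟨-, h2⟩
            · exact hexy h1
            · exact hpxney h2
          refine lemmaA_bad hcard hNdel hA hb hf1f2 ?_ ?_
          · rintro ⟨h, -⟩
            exact hdelself h
          · rintro ⟨-, h⟩
            rw [SimpleGraph.deleteEdges_adj] at h
            exact EH.2.1 h.1
      · by_cases hB : s(ey,py) ∈ N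
        · -- II.B'
          obtain ⟨a, ha⟩ := hN.exists_partner ex
          have hane : a ≠ ey := fun h => heN (h ▸ ha)
          have hf1f2 : s(ey,py) ≠ s(ex,a) := by
            intro h
            rw [Sym2.eq_iff] at h
            rcases h with ⟨h1, -⟩ | ⟨-, h2⟩
            · exact hexy h1.symm
            · exact hpynex h2
          refine lemmaA_bad hcard hNdel hB ha hf1f2 ?_ ?_
          · rintro ⟨h, -⟩
            rw [SimpleGraph.deleteEdges_adj] at h
            apply h.2
            rw [Set.mem_singleton_iff, Sym2.eq_swap]
          · rintro ⟨-, h⟩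
            rw [SimpleGraph.deleteEdges_adj] at h
            exact EH.1 h.1.symm
        · -- II.C
          obtain ⟨a, ha⟩ := hN.exists_partner ex
          obtain ⟨b, hb⟩ := hN.exists_partner ey
          have hane : a ≠ ey := fun h => heN (h ▸ ha)
          have hanepy : a ≠ py := by
            intro h
            exact EH.1 (hN.adj' (h ▸ ha))
          by_cases hP1 : ((G.deleteEdges {s(ex,ey)}).Adj ex b ∧ (G.deleteEdges {s(ex,ey)}).Adj a ey)
          · -- use the pair (s(ex,a), s(py, c)) where c is the N-partner of py
            have hGaey : G.Adj a ey := ((SimpleGraph.deleteEdges_adj).mp hP1.2).1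
            have haeyM : s(a,ey) ∉ M := by
              intro h
              apply hanepy
              have h' : s(ey,a) ∈ M := by rw [Sym2.eq_swap]; exact h
              exact hM.partner_unique h' hpy
            obtain ⟨a₀, ha₀⟩ := hM.exists_partner a
            have EH2 := exact_helper hM hexact hGaey haeyM ha₀ hpy
            obtain ⟨c, hc⟩ := hN.exists_partner py
            have hf1f2 : s(ex,a) ≠ s(py,c) := by
              intro h
              rw [Sym2.eq_iff] at h
              rcases h with ⟨h1, -⟩ | ⟨-, h2⟩
              · exact hpynex h1.symm
              · exact hanepy h2
            refine lemmaA_bad hcard hNdel ha hc hf1f2 ?_ ?_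
            · rintro ⟨h, -⟩
              rw [SimpleGraph.deleteEdges_adj] at h
              exact EH.1 h.1
            · rintro ⟨-, h⟩
              rw [SimpleGraph.deleteEdges_adj] at h
              exact EH2.1 h.1
          · -- the pair (s(ex,a), s(ey,b)) is already violating
            have hf1f2 : s(ex,a) ≠ s(ey,b) := by
              intro h
              rw [Sym2.eq_iff] at h
              rcases h with ⟨h1, -⟩ | ⟨-, h2⟩
              · exact hexy h1
              · exact hane h2
            refine lemmaA_bad hcard hNdel ha hb hf1f2 ?_ ?_
            · rintro ⟨h, -⟩
              exact hdelself h
            · exact hP1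


/-- Lemma 2.2, part 2. -/
theorem stmt1 {V : Type*} [Fintype V] (n : ℕ) (hn : 2 ≤ n)
    (G : SimpleGraph V) (hcard : Fintype.card V = 2 * n)
    (M : Set (Sym2 V)) (hM : IsPM G M) (hf : forcingNum G M = n - 1) :
    (∀ e ∈ G.edgeSet, maxForcing (G.deleteEdges {e}) ≤ n - 2) ↔
      ∀ u v x y : V, s(u, v) ∈ M → s(x, y) ∈ M → s(u, v) ≠ s(x, y) →
        ((G.Adj u x ∧ G.Adj v y ∧ ¬ G.Adj u y ∧ ¬ G.Adj v x) ∨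
         (G.Adj u y ∧ G.Adj v x ∧ ¬ G.Adj u x ∧ ¬ G.Adj v y)) :=
  stmt1' n hn G hcard M hM hf
end

section
/- Let n ≥ 2 and let G ∈ 𝒢_{2n} satisfy F(G) = n−1. Then G has no fixed double bond; that is, for every edge e of G, the graph G−e (obtained by deleting the edge e) still has a perfect matching, so no edge of G is contained in every perfect matching of G. -/
open SimpleGraph

private lemma pm_ncard {V : Type*} [Fintype V] {G : SimpleGraph V} {M : Set (Sym2 V)}
    (h : IsPM G M) : 2 * M.ncard = Fintype.card V := by
  classical
  obtain ⟨hsub, hdisj, hcov⟩ := h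
  have hMfin : M.Finite := Set.toFinite M
  set F : Finset (Sym2 V) := hMfin.toFinset with hF
  have hmemF : ∀ f, f ∈ F ↔ f ∈ M := fun f => hMfin.mem_toFinset
  have hcover : (Finset.univ : Finset V)
      = F.biUnion (fun f => Finset.univ.filter (fun v => v ∈ f)) := by
    ext v
    simp only [Finset.mem_biUnion, Finset.mem_filter, Finset.mem_univ, true_and, true_iff]
    obtain ⟨f, hf, hv⟩ := hcov v
    exact ⟨f, (hmemF f).2 hf, hv⟩
  have hdisjF : ∀ f ∈ F, ∀ g ∈ F, f ≠ g →
      Disjoint (Finset.univ.filter (fun v => v ∈ f)) (Finset.univ.filter (fun v => v ∈ g)) := by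
    intro f hf g hg hne
    rw [Finset.disjoint_left]
    intro v hv hv'
    simp only [Finset.mem_filter] at hv hv'
    exact hdisj f ((hmemF f).1 hf) g ((hmemF g).1 hg) hne v hv.2 hv'.2
  have hcard2 : ∀ f ∈ F, (Finset.univ.filter (fun v => v ∈ f)).card = 2 := by
    intro f hf
    have hfE : f ∈ G.edgeSet := hsub ((hmemF f).1 hf)
    obtain ⟨⟨a, b⟩, rfl⟩ := f.exists_rep
    have hab : a ≠ b := by
      intro hab
      exact G.not_isDiag_of_mem_edgeSet hfE (by simp [Sym2.mk_isDiag_iff, hab])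
    have hfil : Finset.univ.filter (fun v => v ∈ s(a, b)) = {a, b} := by
      ext v
      simp [Sym2.mem_iff]
    rw [hfil, Finset.card_insert_of_notMem (by simp [hab]), Finset.card_singleton]
  have hbu := Finset.card_biUnion hdisjF
  rw [← hcover] at hbu
  have hsum : ∑ f ∈ F, (Finset.univ.filter (fun v => v ∈ f)).card = 2 * F.card := by
    rw [Finset.sum_congr rfl hcard2, Finset.sum_const, smul_eq_mul, mul_comm]
  have hnc : M.ncard = F.card := Set.ncard_eq_toFinset_card M hMfin
  rw [hnc, ← hsum, ← hbu, Fintype.card]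

private lemma pm_eq_of_subset {V : Type*} {G : SimpleGraph V} {M M' : Set (Sym2 V)}
    (hM : IsPM G M) (hM' : IsPM G M') (hsub : M' ⊆ M) : M' = M := by
  refine Set.Subset.antisymm hsub ?_
  intro h hh
  obtain ⟨⟨c, d⟩, rfl⟩ := h.exists_rep
  have hc : c ∈ s(c, d) := by simp [Sym2.mem_iff]
  obtain ⟨x, hxM', hcx⟩ := hM'.2.2 c
  have hxM : x ∈ M := hsub hxM'
  by_cases hxe : x = s(c, d)
  · show s(c, d) ∈ M'
    exact hxe ▸ hxM'
  · exact absurd hc (hM.2.1 x hxM _ hh hxe c hcx)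

/-- Lemma 2.3(i). -/
theorem stmt2 {V : Type*} [Fintype V] (n : ℕ) (hn : 2 ≤ n)
    (G : SimpleGraph V) (hcard : Fintype.card V = 2 * n)
    (hPM : ∃ M, IsPM G M) (hF : maxForcing G = n - 1) :
    ∀ e ∈ G.edgeSet,
      (∃ M, IsPM (G.deleteEdges {e}) M) ∧ (∃ M, IsPM G M ∧ e ∉ M) := by
  classical
  intro e he
  suffices h2 : ∃ M, IsPM G M ∧ e ∉ M by
    refine ⟨?_, h2⟩
    obtain ⟨M, hM, heM⟩ := h2
    refine ⟨M, ?_, hM.2.1, hM.2.2⟩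
    intro f hf
    rw [SimpleGraph.edgeSet_deleteEdges]
    exact ⟨hM.1 hf, by simp only [Set.mem_singleton_iff]; rintro rfl; exact heM hf⟩
  by_contra hno
  push_neg at hno
  -- every perfect matching contains e
  have key : ∀ M, IsPM G M → forcingNum G M ≤ n - 2 := by
    intro M hM
    have heM : e ∈ M := hno M hM
    -- find a second edge g ∈ M distinct from e
    obtain ⟨⟨a, b⟩, rfl⟩ := e.exists_rep
    have hv : ∃ v : V, v ≠ a ∧ v ≠ b := by
      by_contra hv
      push_neg at hv
      have hsub2 : (Finset.univ : Finset V) ⊆ {a, b} := by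
        intro v _
        rcases eq_or_ne v a with rfl | hva
        · simp
        · simp [hv v hva]
      have := Finset.card_le_card hsub2
      have h2 : ({a, b} : Finset V).card ≤ 2 := Finset.card_insert_le a {b}
      rw [Finset.card_univ, hcard] at this
      omega
    obtain ⟨v, hva, hvb⟩ := hv
    have hve : v ∉ s(a, b) := by simp [Sym2.mem_iff, hva, hvb]
    obtain ⟨g, hgM, hvg⟩ := hM.2.2 v
    have hge : g ≠ s(a, b) := fun h => hve (h ▸ hvg)
    set S : Set (Sym2 V) := M \ {s(a, b), g} with hS
    have hforce : IsForcingSet G M S := by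
      refine ⟨Set.diff_subset, ?_⟩
      intro M' hM' hSM'
      refine pm_eq_of_subset hM hM' ?_
      intro x hxM'
      obtain ⟨⟨c, d⟩, rfl⟩ := x.exists_rep
      have hcd : c ≠ d := by
        intro h
        exact G.not_isDiag_of_mem_edgeSet (hM'.1 hxM') (by simp [Sym2.mk_isDiag_iff, h])
      have hsM' : ∀ h ∈ M, h ≠ g → h ∈ M' := by
        intro h hh hhg
        rcases eq_or_ne h (s(a, b)) with rfl | hhe
        · exact hno M' hM'
        · exact hSM' ⟨hh, by simp [hhe, hhg]⟩
      -- for each vertex of x, the M-edge covering it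
      have step : ∀ w, w ∈ s(c, d) → (s(c, d) ∈ M ∨ w ∈ g) := by
        intro w hw
        obtain ⟨y, hyM, hwy⟩ := hM.2.2 w
        rcases eq_or_ne y g with rfl | hyg
        · exact Or.inr hwy
        · have hyM' : y ∈ M' := hsM' y hyM hyg
          rcases eq_or_ne (s(c, d)) y with rfl | hxy
          · exact Or.inl hyM
          · exact absurd hwy (hM'.2.1 _ hxM' y hyM' hxy w hw)
      rcases step c (by simp [Sym2.mem_iff]) with hc | hcg
      · exact hc
      rcases step d (by simp [Sym2.mem_iff]) with hd | hdg
      · exact hd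
      -- c, d ∈ g, c ≠ d, so x = g ∈ M
      obtain ⟨⟨p, q⟩, rfl⟩ := g.exists_rep
      rw [Sym2.mem_iff] at hcg hdg
      have : s(c, d) = s(p, q) := by
        rw [Sym2.eq_iff]
        rcases hcg with rfl | rfl <;> rcases hdg with rfl | rfl <;> tauto
      show s(c, d) ∈ M
      exact this.symm ▸ (show s(p, q) ∈ M from hgM)
    have hMn : M.ncard = n := by
      have := pm_ncard hM
      omega
    have hSn : S.ncard = n - 2 := by
      have hpair : ({s(a, b), g} : Set (Sym2 V)) ⊆ M := by
        intro z hz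
        rcases hz with rfl | hz
        · exact heM
        · exact hz ▸ hgM
      have hp2 : ({s(a, b), g} : Set (Sym2 V)).ncard = 2 :=
        Set.ncard_pair (Ne.symm hge)
      rw [hS, Set.ncard_diff hpair (Set.toFinite _), hp2, hMn]
    exact Nat.sInf_le ⟨S, hforce, hSn⟩
  have hne : {k | ∃ M, IsPM G M ∧ forcingNum G M = k}.Nonempty := by
    obtain ⟨M, hM⟩ := hPM
    exact ⟨forcingNum G M, M, hM, rfl⟩
  have hub : maxForcing G ≤ n - 2 := by
    refine csSup_le hne ?_
    rintro k ⟨M, hM, rfl⟩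
    exact key M hM
  omega
end
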